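/- Cheeger's inequality (easy direction): for any finite graph G, the Cheeger constant satisfies β(G) ≥ λ_2(G)/2, where λ_2(G) is the second-smallest eigenvalue of the graph Laplacian. -/

import Mathlib

/-- The edge boundary `δ(U)`: edges of `G` with exactly one endpoint in `U`. -/
def edgeBoundary {V : Type*} (G : SimpleGraph V) (U : Set V) : Set (Sym2 V) :=
  {e | e ∈ G.edgeSet ∧ (∃ a, a ∈ e ∧ a ∈ U) ∧ (∃ b, b ∈ e ∧ b ∉ U)}

/-- The Cheeger constant `β(G)`: the largest real `β` such that
`|δ(U)| ≥ β · min(|U|, |V \ U|)` for all `U ⊆ V`. -/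
noncomputable def cheegerConst {V : Type*} [Fintype V] (G : SimpleGraph V) : ℝ :=
  sSup {β : ℝ | ∀ U : Set V,
    β * min (U.ncard : ℝ) ((Uᶜ : Set V).ncard : ℝ) ≤ ((edgeBoundary G U).ncard : ℝ)}

/-- The second-smallest Laplacian eigenvalue, via the variational (Rayleigh quotient)
characterization: `λ₂ = inf { xᵀLx / xᵀx : x ⊥ 1, x ≠ 0 }`. -/
noncomputable def lambda2 {V : Type*} [Fintype V] (L : Matrix V V ℝ) : ℝ :=
  sInf {r : ℝ | ∃ x : V → ℝ, x ≠ 0 ∧ (∑ w, x w) = 0 ∧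
    r = dotProduct x (L.mulVec x) / dotProduct x x}

lemma edgeBoundary_compl {V : Type*} (G : SimpleGraph V) (U : Set V) :
    edgeBoundary G Uᶜ = edgeBoundary G U := by
  ext e
  simp only [edgeBoundary, Set.mem_setOf_eq, Set.mem_compl_iff, not_not]
  tauto

lemma rayleigh_nonneg {V : Type*} [Fintype V] [DecidableEq V]
    (G : SimpleGraph V) [DecidableRel G.Adj] (r : ℝ)
    (hr : r ∈ {r : ℝ | ∃ x : V → ℝ, x ≠ 0 ∧ (∑ w, x w) = 0 ∧
      r = dotProduct x ((G.lapMatrix ℝ).mulVec x) / dotProduct x x}) :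
    0 ≤ r := by
  obtain ⟨x, -, -, hx⟩ := hr
  have h1 : 0 ≤ dotProduct x ((G.lapMatrix ℝ).mulVec x) := by
    simpa using (SimpleGraph.posSemidef_lapMatrix ℝ G).dotProduct_mulVec_nonneg x
  have h2 : 0 ≤ dotProduct x x :=
    Finset.sum_nonneg fun i _ => mul_self_nonneg _
  exact hx ▸ div_nonneg h1 h2

lemma lambda2_nonneg {V : Type*} [Fintype V] [DecidableEq V]
    (G : SimpleGraph V) [DecidableRel G.Adj] :
    0 ≤ lambda2 (G.lapMatrix ℝ) :=
  Real.sInf_nonneg fun r hr => rayleigh_nonneg G r hr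

/-- Key estimate: if `U` and `Uᶜ` are nonempty with `|U| ≤ |Uᶜ|`, then
`λ₂/2 · |U| ≤ |δ(U)|`. -/
lemma key_estimate {V : Type*} [Fintype V] [DecidableEq V]
    (G : SimpleGraph V) [DecidableRel G.Adj] (U : Set V)
    (hU : U.Nonempty) (hUc : Uᶜ.Nonempty) (hle : (U.ncard : ℝ) ≤ (Uᶜ.ncard : ℝ)) :
    lambda2 (G.lapMatrix ℝ) / 2 * (U.ncard : ℝ) ≤ ((edgeBoundary G U).ncard : ℝ) := by
  classical
  set A : ℝ := (U.ncard : ℝ) with hA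
  set B : ℝ := ((Uᶜ : Set V).ncard : ℝ) with hB
  set N : ℝ := (Fintype.card V : ℝ) with hN
  have hABN : A + B = N := by
    have hn : U.ncard + Uᶜ.ncard = Fintype.card V := by
      rw [← Nat.card_eq_fintype_card]; exact Set.ncard_add_ncard_compl U
    rw [hA, hB, hN, ← Nat.cast_add, hn]
  have hApos : 0 < A := by
    rw [hA]; exact_mod_cast (Set.ncard_pos U.toFinite).2 hU
  have hBpos : 0 < B := by
    rw [hB]; exact_mod_cast (Set.ncard_pos (Uᶜ).toFinite).2 hUc
  have hNpos : 0 < N := by linarith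
  have hNne : N ≠ 0 := ne_of_gt hNpos
  -- the test vector
  set x : V → ℝ := fun v => (if v ∈ U then (1 : ℝ) else 0) - A / N with hxdef
  -- the set of boundary "darts"
  set D : Finset (V × V) :=
    Finset.univ.filter (fun p : V × V => G.Adj p.1 p.2 ∧ p.1 ∈ U ∧ p.2 ∉ U) with hD
  have hmemD : ∀ p : V × V, p ∈ D ↔ G.Adj p.1 p.2 ∧ p.1 ∈ U ∧ p.2 ∉ U := by
    intro p; simp [hD]
  -- edge boundary is the image of D
  have hbd : edgeBoundary G U = ↑(D.image fun p : V × V => s(p.1, p.2)) := by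
    ext e
    constructor
    · rintro ⟨he, ⟨a, hae, haU⟩, ⟨b, hbe, hbU⟩⟩
      induction e using Sym2.ind with
      | _ u v =>
        have hadj : G.Adj u v := he
        simp only [Sym2.mem_iff] at hae hbe
        simp only [Finset.coe_image, Set.mem_image, Finset.mem_coe]
        rcases hae with rfl | rfl
        · rcases hbe with rfl | rfl
          · exact absurd haU hbU
          · exact ⟨(a, b), (hmemD _).2 ⟨hadj, haU, hbU⟩, rfl⟩
        · rcases hbe with rfl | rfl
          · exact ⟨(a, b), (hmemD _).2 ⟨hadj.symm, haU, hbU⟩, Sym2.eq_swap⟩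
          · exact absurd haU hbU
    · intro he
      simp only [Finset.coe_image, Set.mem_image, Finset.mem_coe] at he
      obtain ⟨p, hp, rfl⟩ := he
      obtain ⟨hadj, h1, h2⟩ := (hmemD p).1 hp
      exact ⟨hadj, ⟨p.1, Sym2.mem_mk_left _ _, h1⟩, ⟨p.2, Sym2.mem_mk_right _ _, h2⟩⟩
  have hcard : ((edgeBoundary G U).ncard : ℝ) = (D.card : ℝ) := by
    rw [hbd, Set.ncard_coe_finset]
    congr 1
    apply Finset.card_image_of_injOn
    intro p hp q hq hpq
    obtain ⟨_, hp1, hp2⟩ := (hmemD p).1 hp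
    obtain ⟨_, hq1, hq2⟩ := (hmemD q).1 hq
    rcases Sym2.eq_iff.1 hpq with ⟨h1, h2⟩ | ⟨h1, h2⟩
    · exact Prod.ext h1 h2
    · exact absurd (h1 ▸ hp1) hq2
  -- sum of indicator
  have hsumind : ∑ v : V, (if v ∈ U then (1 : ℝ) else 0) = A := by
    rw [Finset.sum_boole, hA, Set.ncard_eq_toFinset_card' U,
      Set.filter_mem_univ_eq_toFinset]
  -- sum of x is zero
  have hsumx : (∑ w, x w) = 0 := by
    simp only [hxdef, Finset.sum_sub_distrib, hsumind, Finset.sum_const,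
      Finset.card_univ, nsmul_eq_mul]
    rw [← hN]
    field_simp
    ring
  -- x is nonzero
  obtain ⟨u, hu⟩ := hU
  obtain ⟨w, hw⟩ := hUc
  have hxne : x ≠ 0 := by
    intro h0
    have h1 : x u = 0 := congrFun h0 u
    have h2 : x w = 0 := congrFun h0 w
    simp only [hxdef, hu, if_true, hw, Set.mem_compl_iff] at h1 h2
    rw [if_neg hw] at h2
    linarith
  -- numerator
  have hnum : dotProduct x ((G.lapMatrix ℝ).mulVec x) = (D.card : ℝ) := by
    rw [← Matrix.toLinearMap₂'_apply', SimpleGraph.lapMatrix_toLinearMap₂']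
    have hpt : ∀ i j : V, (if G.Adj i j then (x i - x j) ^ 2 else 0) =
        (if (i, j) ∈ D then (1 : ℝ) else 0) + (if (j, i) ∈ D then (1 : ℝ) else 0) := by
      intro i j
      by_cases h1 : G.Adj i j <;> by_cases h2 : i ∈ U <;> by_cases h3 : j ∈ U <;>
        simp only [hxdef, hmemD, h1, h2, h3, G.adj_comm j i, if_true, if_false,
          not_true, not_false_iff, and_true, and_false, false_and, true_and] <;>
        ring_nf <;> norm_num
    have hsD : ∑ p : V × V, (if p ∈ D then (1 : ℝ) else 0) = (D.card : ℝ) := by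
      simp [Finset.sum_ite_mem]
    have hsD' : ∑ p : V × V, (if (p.2, p.1) ∈ D then (1 : ℝ) else 0) = (D.card : ℝ) := by
      rw [← hsD]
      exact Fintype.sum_equiv (Equiv.prodComm V V) _ _ (fun p => rfl)
    calc (∑ i : V, ∑ j : V, if G.Adj i j then (x i - x j) ^ 2 else 0) / 2
        = (∑ p : V × V, ((if p ∈ D then (1 : ℝ) else 0)
            + (if (p.2, p.1) ∈ D then (1 : ℝ) else 0))) / 2 := by
          rw [Fintype.sum_prod_type]
          congr 1
          exact Finset.sum_congr rfl fun i _ => Finset.sum_congr rfl fun j _ => hpt i j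
      _ = (D.card : ℝ) := by
          rw [Finset.sum_add_distrib, hsD, hsD']; ring
  -- denominator
  have hden : dotProduct x x = A * B / N := by
    have hpt : ∀ v : V, x v * x v =
        (if v ∈ U then (1 : ℝ) else 0) - 2 * (A / N) * (if v ∈ U then (1 : ℝ) else 0)
          + (A / N) ^ 2 := by
      intro v
      by_cases hv : v ∈ U <;> simp only [hxdef, hv, if_true, if_false] <;> ring
    have : dotProduct x x = A - 2 * (A / N) * A + N * (A / N) ^ 2 := by
      unfold dotProduct
      rw [Finset.sum_congr rfl fun v _ => hpt v]
      rw [Finset.sum_add_distrib, Finset.sum_sub_distrib, hsumind, ← Finset.mul_sum,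
        hsumind, Finset.sum_const, Finset.card_univ, nsmul_eq_mul, ← hN]
    rw [this]
    have hBNA : B = N - A := by linarith
    rw [hBNA]
    field_simp
    ring
  have hqpos : 0 < A * B / N := div_pos (mul_pos hApos hBpos) hNpos
  -- λ₂ is at most the Rayleigh quotient of x
  have hmem : (D.card : ℝ) / (A * B / N) ∈ {r : ℝ | ∃ y : V → ℝ, y ≠ 0 ∧ (∑ w, y w) = 0 ∧
      r = dotProduct y ((G.lapMatrix ℝ).mulVec y) / dotProduct y y} :=
    ⟨x, hxne, hsumx, by rw [hnum, hden]⟩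
  have hl2le : lambda2 (G.lapMatrix ℝ) ≤ (D.card : ℝ) / (A * B / N) :=
    csInf_le ⟨0, fun r hr => rayleigh_nonneg G r hr⟩ hmem
  have hl2nn := lambda2_nonneg G
  have hstep : lambda2 (G.lapMatrix ℝ) * (A * B / N) ≤ (D.card : ℝ) :=
    (le_div_iff₀ hqpos).1 hl2le
  have hhalf : A / 2 ≤ A * B / N := by
    rw [div_le_div_iff₀ (by norm_num : (0:ℝ) < 2) hNpos]
    nlinarith
  calc lambda2 (G.lapMatrix ℝ) / 2 * A = lambda2 (G.lapMatrix ℝ) * (A / 2) := by ring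
    _ ≤ lambda2 (G.lapMatrix ℝ) * (A * B / N) := by
        exact mul_le_mul_of_nonneg_left hhalf hl2nn
    _ ≤ (D.card : ℝ) := hstep
    _ = ((edgeBoundary G U).ncard : ℝ) := hcard.symm

/-- Cheeger's inequality (easy direction): for any finite graph `G`,
`β(G) ≥ λ₂(G)/2`, where `λ₂(G)` is the second-smallest eigenvalue of the graph
Laplacian. -/
theorem stmt9 {V : Type*} [Fintype V] [DecidableEq V]
    (G : SimpleGraph V) [DecidableRel G.Adj] :
    lambda2 (G.lapMatrix ℝ) / 2 ≤ cheegerConst G := by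
  classical
  by_cases h : ∀ U : Set V, U = ∅ ∨ U = Set.univ
  · -- degenerate case: at most one vertex
    have hsub : Subsingleton V := by
      constructor
      intro a b
      by_contra hab
      rcases h {a} with h1 | h1
      · exact absurd h1 (by simp)
      · have hb : b ∈ ({a} : Set V) := Set.eq_univ_iff_forall.mp h1 b
        exact hab (Set.mem_singleton_iff.mp hb).symm
    have hl2 : lambda2 (G.lapMatrix ℝ) = 0 := by
      have : {r : ℝ | ∃ x : V → ℝ, x ≠ 0 ∧ (∑ w, x w) = 0 ∧
          r = dotProduct x ((G.lapMatrix ℝ).mulVec x) / dotProduct x x}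
          = ∅ := by
        ext r
        simp only [Set.mem_setOf_eq, Set.mem_empty_iff_false, iff_false, not_exists]
        rintro x ⟨hx, hs, -⟩
        apply hx
        funext v
        have : ∑ w, x w = x v := by
          rw [← Finset.sum_subset (Finset.subset_univ {v})]
          · simp
          · intro w _ hw
            simp only [Finset.mem_singleton] at hw
            exact absurd (Subsingleton.elim w v) hw
        rw [this] at hs
        exact hs
      rw [lambda2, this, Real.sInf_empty]
    have hch : cheegerConst G = 0 := by
      have huniv : {β : ℝ | ∀ U : Set V,
          β * min (U.ncard : ℝ) ((Uᶜ : Set V).ncard : ℝ)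
            ≤ ((edgeBoundary G U).ncard : ℝ)} = Set.univ := by
        ext β
        simp only [Set.mem_setOf_eq, Set.mem_univ, iff_true]
        intro U
        rcases h U with rfl | rfl
        · simp
        · simp
      rw [cheegerConst, huniv, Real.sSup_univ]
    rw [hl2, hch]
    norm_num
  · push_neg at h
    obtain ⟨U₀, hU₀⟩ := h
    have hU₀ne : U₀.Nonempty := hU₀.1
    have hU₀cne : (U₀ᶜ).Nonempty := by
      rw [Set.nonempty_compl]
      exact hU₀.2
    have hbdd : BddAbove {β : ℝ | ∀ U : Set V,
        β * min (U.ncard : ℝ) ((Uᶜ : Set V).ncard : ℝ)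
          ≤ ((edgeBoundary G U).ncard : ℝ)} := by
      refine ⟨((edgeBoundary G U₀).ncard : ℝ), fun β hβ => ?_⟩
      have hmin : (1 : ℝ) ≤ min (U₀.ncard : ℝ) ((U₀ᶜ : Set V).ncard : ℝ) := by
        have h1 : 1 ≤ U₀.ncard := (Set.ncard_pos U₀.toFinite).2 hU₀ne
        have h2 : 1 ≤ (U₀ᶜ).ncard := (Set.ncard_pos (U₀ᶜ).toFinite).2 hU₀cne
        simp only [le_min_iff]
        exact ⟨by exact_mod_cast h1, by exact_mod_cast h2⟩
      rcases le_or_gt β 0 with hβ0 | hβ0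
      · exact hβ0.trans (by positivity)
      · calc β = β * 1 := (mul_one β).symm
          _ ≤ β * min (U₀.ncard : ℝ) ((U₀ᶜ : Set V).ncard : ℝ) :=
              mul_le_mul_of_nonneg_left hmin hβ0.le
          _ ≤ ((edgeBoundary G U₀).ncard : ℝ) := hβ U₀
    apply le_csSup hbdd
    intro U
    by_cases hUe : U = ∅
    · subst hUe; simp
    by_cases hUce : Uᶜ = ∅
    · have : U = Set.univ := by
        rw [← Set.compl_empty, ← hUce, compl_compl]
      subst this
      simp
    have hUne : U.Nonempty := Set.nonempty_iff_ne_empty.2 hUe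
    have hUcne : (Uᶜ).Nonempty := Set.nonempty_iff_ne_empty.2 hUce
    rcases le_total ((U.ncard : ℝ)) (((Uᶜ : Set V).ncard : ℝ)) with hc | hc
    · rw [min_eq_left hc]
      exact key_estimate G U hUne hUcne hc
    · rw [min_eq_right hc]
      have := key_estimate G (Uᶜ) hUcne (by rwa [compl_compl]) (by rwa [compl_compl])
      rwa [edgeBoundary_compl] at this
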